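/- arXiv:2507.18963 — 6 statements merged into one kernel-verified Lean document; each statement's English description precedes it below -/
import Mathlib

section
/- Let R be a commutative ring that is an algebra over ℂ, let n ≥ 1, let A be an upper unitriangular n×n matrix over R and let Z be a symmetric n×n matrix over R. Then there exist symmetric n×n matrices Z₁, Z₂, Z₃, Z₄, Z₅, Z₆, Z₇ over R such that M⁻(A,Z) = M⁻(Z₁)·M⁺(Z₂)·M⁻(Z₃)·M⁺(Z₄)·M⁻(Z₅)·M⁺(Z₆)·M⁻(Z₇). (This is the ring-theoretic form, with R playing the role of the ring of holomorphic functions on a Stein space, of the theorem that every lower unitriangular Ω̃-symplectic matrix is a product of 7 unitriangular symplectic matrices with respect to the standard symplectic form.) -/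
open Matrix Polynomial Finset

/-- `M⁻(G) = [[Iₙ, 0], [G, Iₙ]]`. -/
def Mneg {R : Type*} [CommRing R] {n : ℕ} (G : Matrix (Fin n) (Fin n) R) :
    Matrix (Fin n ⊕ Fin n) (Fin n ⊕ Fin n) R :=
  Matrix.fromBlocks 1 0 G 1

/-- `M⁺(G) = [[Iₙ, G], [0, Iₙ]]`. -/
def Mpos {R : Type*} [CommRing R] {n : ℕ} (G : Matrix (Fin n) (Fin n) R) :
    Matrix (Fin n ⊕ Fin n) (Fin n ⊕ Fin n) R :=
  Matrix.fromBlocks 1 G 0 1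

/-- `M⁻(A,Z) = [[Iₙ,0],[Z,Iₙ]]·[[A⁻ᵀ,0],[0,A]]`. -/
noncomputable def MnegAZ {R : Type*} [CommRing R] {n : ℕ}
    (A Z : Matrix (Fin n) (Fin n) R) :
    Matrix (Fin n ⊕ Fin n) (Fin n ⊕ Fin n) R :=
  Matrix.fromBlocks 1 0 Z 1 * Matrix.fromBlocks (Aᵀ)⁻¹ 0 0 A

/-- Upper triangular with all diagonal entries `1`. -/
def IsUpperUnitriangular {R : Type*} [CommRing R] {n : ℕ}
    (A : Matrix (Fin n) (Fin n) R) : Prop :=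
  (∀ i, A i i = 1) ∧ ∀ i j : Fin n, j < i → A i j = 0


lemma aux7 {R : Type*} [CommRing R] {n : ℕ}
    (V U D D' Z : Matrix (Fin n) (Fin n) R)
    (hVU : V * U = 1) (hUV : U * V = 1) (hDD : D * D' = 1) (hD'D : D' * D = 1)
    (hDT : Dᵀ = D) (hD'T : D'ᵀ = D') (hZ : Zᵀ = Z) :
    ∃ Z₁ Z₂ Z₃ Z₄ Z₅ Z₆ Z₇ : Matrix (Fin n) (Fin n) R,
      Z₁.IsSymm ∧ Z₂.IsSymm ∧ Z₃.IsSymm ∧ Z₄.IsSymm ∧ Z₅.IsSymm ∧ Z₆.IsSymm ∧ Z₇.IsSymm ∧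
      MnegAZ (V * D * U * D') Z
        = Mneg Z₁ * Mpos Z₂ * Mneg Z₃ * Mpos Z₄ * Mneg Z₅ * Mpos Z₆ * Mneg Z₇ := by
  have hUtVt : Uᵀ * Vᵀ = 1 := by rw [← Matrix.transpose_mul, hVU, Matrix.transpose_one]
  have hVtUt : Vᵀ * Uᵀ = 1 := by rw [← Matrix.transpose_mul, hUV, Matrix.transpose_one]
  have cVU : ∀ X : Matrix (Fin n) (Fin n) R, V * (U * X) = X := fun X => by
    rw [← Matrix.mul_assoc, hVU, Matrix.one_mul]
  have cUV : ∀ X : Matrix (Fin n) (Fin n) R, U * (V * X) = X := fun X => by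
    rw [← Matrix.mul_assoc, hUV, Matrix.one_mul]
  have cDD : ∀ X : Matrix (Fin n) (Fin n) R, D * (D' * X) = X := fun X => by
    rw [← Matrix.mul_assoc, hDD, Matrix.one_mul]
  have cD'D : ∀ X : Matrix (Fin n) (Fin n) R, D' * (D * X) = X := fun X => by
    rw [← Matrix.mul_assoc, hD'D, Matrix.one_mul]
  have cUtVt : ∀ X : Matrix (Fin n) (Fin n) R, Uᵀ * (Vᵀ * X) = X := fun X => by
    rw [← Matrix.mul_assoc, hUtVt, Matrix.one_mul]
  have cVtUt : ∀ X : Matrix (Fin n) (Fin n) R, Vᵀ * (Uᵀ * X) = X := fun X => by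
    rw [← Matrix.mul_assoc, hVtUt, Matrix.one_mul]
  have hAinv : ((V * D * U * D')ᵀ)⁻¹ = (D * V * D' * U)ᵀ := by
    apply Matrix.inv_eq_right_inv
    rw [← Matrix.transpose_mul]
    have h : (D * V * D' * U) * (V * D * U * D') = 1 := by
      simp only [Matrix.mul_assoc, cUV, cD'D, cVU, hDD]
    rw [h, Matrix.transpose_one]
  refine ⟨V * Vᵀ - V * D * U * D' * D' * D' * Uᵀ * D * Vᵀ
            + V * D * U * D' * D' * Uᵀ * D * Vᵀ + Z,
          -(Uᵀ * U),
          V * Vᵀ - V * D' * Vᵀ + V * D' * Vᵀ * D * D * V * D' * Vᵀ,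
          Uᵀ * D * U,
          D' * D' - D' - V * D' * Vᵀ,
          D, 0, ?_, ?_, ?_, ?_, ?_, ?_, ?_, ?_⟩
  · simp [Matrix.IsSymm, Matrix.transpose_add, Matrix.transpose_sub, Matrix.transpose_mul,
      Matrix.transpose_transpose, hDT, hD'T, hZ, Matrix.mul_assoc]
  · simp [Matrix.IsSymm, Matrix.transpose_mul, Matrix.transpose_transpose]
  · simp [Matrix.IsSymm, Matrix.transpose_add, Matrix.transpose_sub, Matrix.transpose_mul,
      Matrix.transpose_transpose, hDT, hD'T, Matrix.mul_assoc]
  · simp [Matrix.IsSymm, Matrix.transpose_mul, Matrix.transpose_transpose, hDT, Matrix.mul_assoc]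
  · simp [Matrix.IsSymm, Matrix.transpose_sub, Matrix.transpose_mul,
      Matrix.transpose_transpose, hDT, hD'T, Matrix.mul_assoc]
  · simp [Matrix.IsSymm, hDT]
  · simp [Matrix.IsSymm]
  · simp only [MnegAZ, Mneg, Mpos, hAinv]
    simp only [Matrix.fromBlocks_multiply, Matrix.mul_one, Matrix.one_mul, Matrix.mul_zero,
      Matrix.zero_mul, add_zero, zero_add, mul_one, one_mul, mul_zero, zero_mul]
    rw [Matrix.fromBlocks_inj]
    refine ⟨?_, ?_, ?_, ?_⟩ <;>
    · simp only [Matrix.transpose_mul, Matrix.transpose_transpose, hDT, hD'T,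
        Matrix.mul_assoc, mul_add, add_mul, mul_sub, sub_mul, mul_one, one_mul,
        mul_zero, zero_mul, neg_mul, mul_neg, neg_neg, cVU, cUV, cDD, cD'D, cUtVt, cVtUt,
        hVU, hUV, hDD, hD'D, hUtVt, hVtUt, add_zero, zero_add]
      abel

lemma diag_mul_of_tri {R : Type*} [CommRing R] {n : ℕ}
    {M N : Matrix (Fin n) (Fin n) R} (hM : M.BlockTriangular id)
    (hN : N.BlockTriangular id) (i : Fin n) : (M * N) i i = M i i * N i i := by
  rw [Matrix.mul_apply]
  apply Finset.sum_eq_single_of_mem i (Finset.mem_univ i)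
  intro k _ hk
  rcases lt_or_gt_of_ne hk with h | h
  · rw [hM (show (id k : Fin _) < id i from h), zero_mul]
  · rw [hN (show (id i : Fin _) < id k from h), mul_zero]

lemma aeval_tri {R : Type*} [CommRing R] {n : ℕ}
    (B : Matrix (Fin n) (Fin n) R) (hB : B.BlockTriangular id) (p : R[X]) :
    (Polynomial.aeval B p).BlockTriangular id ∧
      ∀ i, (Polynomial.aeval B p) i i = p.eval (B i i) := by
  induction p using Polynomial.induction_on with
  | C a =>
      constructor
      · rw [Polynomial.aeval_C, Matrix.algebraMap_eq_diagonal]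
        exact Matrix.blockTriangular_diagonal _
      · intro i
        rw [Polynomial.aeval_C, Matrix.algebraMap_eq_diagonal, Matrix.diagonal_apply_eq,
          Polynomial.eval_C]
        rfl
  | add p q hp hq =>
      refine ⟨by rw [map_add]; exact hp.1.add hq.1, fun i => ?_⟩
      rw [map_add, Polynomial.eval_add, ← hp.2 i, ← hq.2 i]
      rfl
  | monomial k a ih =>
      have he : (Polynomial.C a * Polynomial.X ^ (k + 1) : R[X])
          = (Polynomial.C a * Polynomial.X ^ k) * Polynomial.X := by ring
      rw [he]
      constructor
      · rw [_root_.map_mul, Polynomial.aeval_X]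
        exact ih.1.mul hB
      · intro i
        rw [_root_.map_mul, Polynomial.aeval_X, diag_mul_of_tri ih.1 hB, ih.2]
        simp [Polynomial.eval_mul]

lemma exists_VUDD {R : Type*} [CommRing R] [Algebra ℂ R] {n : ℕ}
    (A : Matrix (Fin n) (Fin n) R) (hA : IsUpperUnitriangular A) :
    ∃ V U D D' : Matrix (Fin n) (Fin n) R,
      V * U = 1 ∧ U * V = 1 ∧ D * D' = 1 ∧ D' * D = 1 ∧ Dᵀ = D ∧ D'ᵀ = D' ∧
      A = V * D * U * D' := by
  classical
  set c : Fin n → ℂ := fun i => (i : ℕ) + 1 with hc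
  have hcinj : ∀ i j : Fin n, c i = c j → i = j := by
    intro i j h
    simp only [hc, add_left_inj, Nat.cast_inj] at h
    exact Fin.ext h
  have hc0 : ∀ i, c i ≠ 0 := fun i => Nat.cast_add_one_ne_zero _
  set δ : Fin n → R := fun i => algebraMap ℂ R (c i) with hδ
  set D : Matrix (Fin n) (Fin n) R := Matrix.diagonal δ with hD
  set D' : Matrix (Fin n) (Fin n) R :=
    Matrix.diagonal (fun i => algebraMap ℂ R (c i)⁻¹) with hD'
  have hDD : D * D' = 1 := by
    rw [hD, hD', Matrix.diagonal_mul_diagonal]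
    have hfn : (fun i => δ i * algebraMap ℂ R (c i)⁻¹) = fun _ => (1 : R) := by
      funext i
      rw [hδ, ← _root_.map_mul, mul_inv_cancel₀ (hc0 i), _root_.map_one]
    rw [hfn, Matrix.diagonal_one]
  have hD'D : D' * D = 1 := by
    rw [hD, hD', Matrix.diagonal_mul_diagonal]
    have hfn : (fun i => algebraMap ℂ R (c i)⁻¹ * δ i) = fun _ => (1 : R) := by
      funext i
      rw [hδ, ← _root_.map_mul, inv_mul_cancel₀ (hc0 i), _root_.map_one]
    rw [hfn, Matrix.diagonal_one]
  set B : Matrix (Fin n) (Fin n) R := A * D with hB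
  have htriA : A.BlockTriangular id := fun i j h => hA.2 i j h
  have htriB : B.BlockTriangular id := htriA.mul (Matrix.blockTriangular_diagonal δ)
  have hBd : ∀ i, B i i = δ i := by
    intro i
    rw [hB, hD, Matrix.mul_diagonal, hA.1, one_mul]
  have charB : B.charpoly = ∏ k, (Polynomial.X - Polynomial.C (δ k)) := by
    rw [Matrix.charpoly_of_upperTriangular B htriB]
    exact Finset.prod_congr rfl fun k _ => by rw [hBd]
  set Q : Fin n → Matrix (Fin n) (Fin n) R := fun j =>
    Polynomial.aeval B (∏ k ∈ Finset.univ.erase j, (Polynomial.X - Polynomial.C (δ k))) with hQ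
  have key : ∀ j, B * Q j = δ j • Q j := by
    intro j
    have h1 : (Polynomial.X - Polynomial.C (δ j)) *
        ∏ k ∈ Finset.univ.erase j, (Polynomial.X - Polynomial.C (δ k))
        = ∏ k, (Polynomial.X - Polynomial.C (δ k)) :=
      Finset.mul_prod_erase Finset.univ
        (fun k => Polynomial.X - Polynomial.C (δ k)) (Finset.mem_univ j)
    have h2 : Polynomial.aeval B ((Polynomial.X - Polynomial.C (δ j)) *
        ∏ k ∈ Finset.univ.erase j, (Polynomial.X - Polynomial.C (δ k))) = 0 := by
      rw [h1, ← charB, Matrix.aeval_self_charpoly]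
    rw [_root_.map_mul, map_sub, Polynomial.aeval_X, Polynomial.aeval_C, sub_mul,
      sub_eq_zero] at h2
    rw [h2, Algebra.smul_def]
  set e : Fin n → R := fun j =>
    algebraMap ℂ R ((∏ k ∈ Finset.univ.erase j, (c j - c k))⁻¹) with he
  set V : Matrix (Fin n) (Fin n) R := Matrix.of (fun i j => e j * Q j i j) with hV
  have hVapp : ∀ i j, V i j = e j * Q j i j := fun i j => rfl
  have hBV : B * V = V * D := by
    ext i j
    rw [Matrix.mul_apply, hD, Matrix.mul_diagonal]
    have h := congrFun (congrFun (key j) i) j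
    rw [Matrix.mul_apply] at h
    rw [Matrix.smul_apply, smul_eq_mul] at h
    calc ∑ k, B i k * V k j = ∑ k, e j * (B i k * Q j k j) := by
          refine Finset.sum_congr rfl fun k _ => ?_
          rw [hVapp]; ring
      _ = e j * ∑ k, B i k * Q j k j := by rw [Finset.mul_sum]
      _ = e j * (δ j * Q j i j) := by rw [h]
      _ = V i j * δ j := by rw [hVapp]; ring
  have htriQ : ∀ j, (Q j).BlockTriangular id := fun j => (aeval_tri B htriB _).1
  have htriV : V.BlockTriangular id := by
    intro i j h
    rw [hVapp, htriQ j h, mul_zero]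
  have hVdiag : ∀ i, V i i = 1 := by
    intro i
    have h := (aeval_tri B htriB
      (∏ k ∈ Finset.univ.erase i, (Polynomial.X - Polynomial.C (δ k)))).2 i
    rw [hVapp i i]
    rw [show Q i = Polynomial.aeval B
      (∏ k ∈ Finset.univ.erase i, (Polynomial.X - Polynomial.C (δ k))) from rfl, h,
      Polynomial.eval_prod]
    simp only [Polynomial.eval_sub, Polynomial.eval_X, Polynomial.eval_C, hBd]
    have hp : ∏ k ∈ Finset.univ.erase i, (δ i - δ k)
        = algebraMap ℂ R (∏ k ∈ Finset.univ.erase i, (c i - c k)) := by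
      rw [map_prod]
      exact Finset.prod_congr rfl fun k _ => by rw [hδ]; exact (map_sub _ _ _).symm
    rw [hp]
    have hne : (∏ k ∈ Finset.univ.erase i, (c i - c k)) ≠ 0 :=
      Finset.prod_ne_zero_iff.mpr fun k hk =>
        sub_ne_zero.mpr fun hh => (Finset.ne_of_mem_erase hk) (hcinj _ _ hh.symm)
    show (algebraMap ℂ R) (∏ k ∈ Finset.univ.erase i, (c i - c k))⁻¹ *
      (algebraMap ℂ R) (∏ k ∈ Finset.univ.erase i, (c i - c k)) = 1
    rw [← _root_.map_mul, inv_mul_cancel₀ hne, _root_.map_one]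
  have hdetV : V.det = 1 := by
    rw [Matrix.det_of_upperTriangular htriV]
    exact Finset.prod_eq_one fun i _ => hVdiag i
  haveI : Invertible V := V.invertibleOfIsUnitDet (by rw [hdetV]; exact isUnit_one)
  refine ⟨V, ⅟V, D, D', mul_invOf_self V, invOf_mul_self V, hDD, hD'D,
    by rw [hD]; exact Matrix.diagonal_transpose δ,
    by rw [hD']; exact Matrix.diagonal_transpose _, ?_⟩
  have hBV' : (A * D) * V = V * D := by rw [← hB]; exact hBV
  have h1 : A * D = V * D * ⅟V := by
    calc A * D = ((A * D) * V) * ⅟V := by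
          rw [Matrix.mul_assoc (A * D) V ⅟V, mul_invOf_self, Matrix.mul_one]
      _ = (V * D) * ⅟V := by rw [hBV']
  calc A = A * (D * D') := by rw [hDD, Matrix.mul_one]
    _ = (A * D) * D' := by rw [Matrix.mul_assoc]
    _ = V * D * ⅟V * D' := by rw [h1]

theorem stmt0 {R : Type*} [CommRing R] [Algebra ℂ R] {n : ℕ} (hn : 1 ≤ n)
    (A Z : Matrix (Fin n) (Fin n) R)
    (hA : IsUpperUnitriangular A) (hZ : Z.IsSymm) :
    ∃ Z₁ Z₂ Z₃ Z₄ Z₅ Z₆ Z₇ : Matrix (Fin n) (Fin n) R,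
      Z₁.IsSymm ∧ Z₂.IsSymm ∧ Z₃.IsSymm ∧ Z₄.IsSymm ∧ Z₅.IsSymm ∧ Z₆.IsSymm ∧ Z₇.IsSymm ∧
      MnegAZ A Z = Mneg Z₁ * Mpos Z₂ * Mneg Z₃ * Mpos Z₄ * Mneg Z₅ * Mpos Z₆ * Mneg Z₇ := by
  obtain ⟨V, U, D, D', hVU, hUV, hDD, hD'D, hDT, hD'T, hAeq⟩ := exists_VUDD A hA
  rw [hAeq]
  exact aux7 V U D D' Z hVU hUV hDD hD'D hDT hD'T hZ.eq
end

section
/- Let R be a commutative ring that is an algebra over ℂ, let n ≥ 1, and let λ₁, …, λₙ be pairwise distinct complex numbers. Let A be an upper triangular n×n matrix over R whose i-th diagonal entry equals λᵢ·1_R for each i. Then there exists an upper unitriangular n×n matrix K over R (which is automatically invertible) such that A = K·Λ·K⁻¹, where Λ is the diagonal matrix with diagonal entries λ₁·1_R, …, λₙ·1_R. -/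
open Matrix

noncomputable def Kaux {R : Type*} [CommRing R] [Algebra ℂ R] {n : ℕ}
    (lam : Fin n → ℂ) (A : Matrix (Fin n) (Fin n) R) : Fin n → Fin n → R
  | i, j =>
    if _h : i < j then
      algebraMap ℂ R (lam j - lam i)⁻¹ *
        ∑ k ∈ (Finset.Ioc i j).attach, A i k.1 * Kaux lam A k.1 j
    else if i = j then 1 else 0
termination_by i j => j.val - i.val
decreasing_by
  have hk := Finset.mem_Ioc.mp k.2
  omega

section
variable {R : Type*} [CommRing R] [Algebra ℂ R] {n : ℕ}
    (lam : Fin n → ℂ) (A : Matrix (Fin n) (Fin n) R)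

lemma Kaux_diag (i : Fin n) : Kaux lam A i i = 1 := by
  rw [Kaux]; simp

lemma Kaux_low {i j : Fin n} (h : j < i) : Kaux lam A i j = 0 := by
  rw [Kaux]
  rw [dif_neg (by omega), if_neg (by omega)]

lemma Kaux_up {i j : Fin n} (h : i < j) :
    Kaux lam A i j = algebraMap ℂ R (lam j - lam i)⁻¹ *
      ∑ k ∈ (Finset.Ioc i j).attach, A i k.1 * Kaux lam A k.1 j := by
  rw [Kaux, dif_pos h]

end

theorem stmt2 {R : Type*} [CommRing R] [Algebra ℂ R] {n : ℕ} (hn : 1 ≤ n)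
    (lam : Fin n → ℂ) (hlam : Function.Injective lam)
    (A : Matrix (Fin n) (Fin n) R)
    (hAtri : ∀ i j : Fin n, j < i → A i j = 0)
    (hAdiag : ∀ i, A i i = algebraMap ℂ R (lam i)) :
    ∃ K : Matrix (Fin n) (Fin n) R, IsUpperUnitriangular K ∧
      A = K * Matrix.diagonal (fun i => algebraMap ℂ R (lam i)) * K⁻¹ := by
  set K : Matrix (Fin n) (Fin n) R := Matrix.of (Kaux lam A) with hKdef
  have hKd : ∀ i, K i i = 1 := fun i => Kaux_diag lam A i
  have hKl : ∀ i j : Fin n, j < i → K i j = 0 := fun i j h => Kaux_low lam A h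
  -- main identity: A * K = K * Λ
  have hmul : A * K = K * Matrix.diagonal (fun i => algebraMap ℂ R (lam i)) := by
    ext i j
    rw [Matrix.mul_apply, Matrix.mul_diagonal]
    rcases lt_trichotomy i j with hij | hij | hij
    · -- i < j
      have hsub : insert i (Finset.Ioc i j) ⊆ Finset.univ := Finset.subset_univ _
      have hzero : ∀ k ∈ Finset.univ, k ∉ insert i (Finset.Ioc i j) →
          A i k * K k j = 0 := by
        intro k _ hk
        simp only [Finset.mem_insert, Finset.mem_Ioc, not_or, not_and_or, not_lt, not_le] at hk
        rcases hk.2 with h1 | h2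
        · rcases lt_or_eq_of_le h1 with h | h
          · rw [hAtri i k h, zero_mul]
          · exact absurd h hk.1
        · rw [hKl k j h2, mul_zero]
      rw [← Finset.sum_subset hsub hzero]
      rw [Finset.sum_insert (by simp)]
      have hS : ∑ k ∈ Finset.Ioc i j, A i k * K k j
          = ∑ k ∈ (Finset.Ioc i j).attach, A i k.1 * Kaux lam A k.1 j := by
        exact (Finset.sum_attach (Finset.Ioc i j) (fun k => A i k * K k j)).symm
      have hKij : K i j = algebraMap ℂ R (lam j - lam i)⁻¹ *
          ∑ k ∈ Finset.Ioc i j, A i k * K k j := by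
        rw [hS]; exact Kaux_up lam A hij
      set S := ∑ k ∈ Finset.Ioc i j, A i k * K k j with hSdef
      have hne : lam j - lam i ≠ 0 := sub_ne_zero.mpr (fun h => (Fin.ne_of_lt hij) (hlam h).symm)
      have hunit : algebraMap ℂ R (lam j - lam i) * algebraMap ℂ R (lam j - lam i)⁻¹ = 1 := by
        rw [← RingHom.map_mul, mul_inv_cancel₀ hne, RingHom.map_one]
      rw [hAdiag i, hKij]
      have : (algebraMap ℂ R (lam j) - algebraMap ℂ R (lam i)) *
          (algebraMap ℂ R (lam j - lam i)⁻¹ * S) = S := by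
        rw [← map_sub, ← mul_assoc, hunit, one_mul]
      linear_combination -this
    · -- i = j
      subst hij
      rw [hKd i, one_mul]
      rw [Finset.sum_eq_single i]
      · rw [hKd i, mul_one, hAdiag i]
      · intro k _ hk
        rcases lt_or_gt_of_ne hk with h | h
        · rw [hAtri i k h, zero_mul]
        · rw [hKl k i h, mul_zero]
      · simp
    · -- j < i
      rw [hKl i j hij, zero_mul]
      apply Finset.sum_eq_zero
      intro k _
      rcases lt_or_ge k i with h | h
      · rw [hAtri i k h, zero_mul]
      · rw [hKl k j (lt_of_lt_of_le hij h), mul_zero]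
  have hdet : K.det = 1 := by
    have htri : K.BlockTriangular id := fun i j h => hKl i j h
    rw [Matrix.det_of_upperTriangular htri]
    simp [hKd]
  have hinv : K * K⁻¹ = 1 := Matrix.mul_nonsing_inv K (by rw [hdet]; exact isUnit_one)
  refine ⟨K, ⟨hKd, hKl⟩, ?_⟩
  rw [← hmul, mul_assoc, hinv, mul_one]
end

section
/- Let R be a commutative ring, n ≥ 1, and let Λ be an invertible diagonal n×n matrix over R. Then the 2n×2n block matrix [[Λ, 0], [0, Λ⁻¹]] equals the product M⁺(Λ − Iₙ)·M⁻(Iₙ)·M⁺(Λ⁻¹ − Iₙ)·M⁻(−Λ); moreover each of the four n×n matrices Λ − Iₙ, Iₙ, Λ⁻¹ − Iₙ, −Λ is symmetric, so each factor is a unitriangular symplectic matrix. -/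
open Matrix

theorem stmt7 {R : Type*} [CommRing R] {n : ℕ} (hn : 1 ≤ n)
    (d : Fin n → R) (hd : IsUnit (Matrix.diagonal d)) :
    Matrix.fromBlocks (Matrix.diagonal d) 0 0 (Matrix.diagonal d)⁻¹ =
        Mpos (Matrix.diagonal d - 1) * Mneg 1 * Mpos ((Matrix.diagonal d)⁻¹ - 1) *
          Mneg (-(Matrix.diagonal d)) ∧
      (Matrix.diagonal d - 1).IsSymm ∧ (1 : Matrix (Fin n) (Fin n) R).IsSymm ∧
      ((Matrix.diagonal d)⁻¹ - 1).IsSymm ∧ (-(Matrix.diagonal d)).IsSymm := by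
  have h1 : Matrix.diagonal d * (Matrix.diagonal d)⁻¹ = 1 :=
    mul_nonsing_inv _ (isUnit_iff_isUnit_det _ |>.mp hd)
  have h2 : (Matrix.diagonal d)⁻¹ * Matrix.diagonal d = 1 :=
    nonsing_inv_mul _ (isUnit_iff_isUnit_det _ |>.mp hd)
  have hsd : (Matrix.diagonal d).IsSymm := Matrix.isSymm_diagonal d
  have hsi : ((Matrix.diagonal d)⁻¹).IsSymm := by
    rw [Matrix.IsSymm, Matrix.transpose_nonsing_inv, hsd.eq]
  refine ⟨?_, hsd.sub Matrix.isSymm_one, Matrix.isSymm_one,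
    hsi.sub Matrix.isSymm_one, hsd.neg⟩
  unfold Mpos Mneg
  simp only [Matrix.fromBlocks_multiply, mul_sub, sub_mul, mul_add, add_mul, mul_neg,
    neg_mul, one_mul, mul_one, mul_zero, zero_mul, h1, h2, add_zero, zero_add]
  rw [Matrix.fromBlocks_inj]
  refine ⟨by abel, by abel, by abel, by abel⟩
end

section
/- Let R be a commutative ring, n ≥ 1, and let P₁ and P₂ be invertible symmetric n×n matrices over R. Then the 2n×2n block matrix [[P₁P₂, 0], [0, P₁⁻¹P₂⁻¹]] equals the product M⁻(P₁⁻¹P₂⁻¹P₁⁻¹ − P₁⁻¹)·M⁺(P₁)·M⁻(P₂ − P₁⁻¹)·M⁺(−P₂⁻¹); moreover each of the four n×n matrices P₁⁻¹P₂⁻¹P₁⁻¹ − P₁⁻¹, P₁, P₂ − P₁⁻¹, −P₂⁻¹ is symmetric, so each factor is a unitriangular symplectic matrix. -/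
open Matrix

theorem stmt9 {R : Type*} [CommRing R] {n : ℕ} (hn : 1 ≤ n)
    (P₁ P₂ : Matrix (Fin n) (Fin n) R)
    (h₁ : IsUnit P₁) (h₂ : IsUnit P₂) (hs₁ : P₁.IsSymm) (hs₂ : P₂.IsSymm) :
    Matrix.fromBlocks (P₁ * P₂) 0 0 (P₁⁻¹ * P₂⁻¹) =
        Mneg (P₁⁻¹ * P₂⁻¹ * P₁⁻¹ - P₁⁻¹) * Mpos P₁ * Mneg (P₂ - P₁⁻¹) * Mpos (-P₂⁻¹) ∧
      (P₁⁻¹ * P₂⁻¹ * P₁⁻¹ - P₁⁻¹).IsSymm ∧ P₁.IsSymm ∧ (P₂ - P₁⁻¹).IsSymm ∧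
      (-P₂⁻¹).IsSymm := by
  have i1 : P₁⁻¹ * P₁ = 1 := nonsing_inv_mul _ ((isUnit_iff_isUnit_det _).mp h₁)
  have i1' : P₁ * P₁⁻¹ = 1 := mul_nonsing_inv _ ((isUnit_iff_isUnit_det _).mp h₁)
  have i2 : P₂⁻¹ * P₂ = 1 := nonsing_inv_mul _ ((isUnit_iff_isUnit_det _).mp h₂)
  have i2' : P₂ * P₂⁻¹ = 1 := mul_nonsing_inv _ ((isUnit_iff_isUnit_det _).mp h₂)
  have t1 : P₁⁻¹ᵀ = P₁⁻¹ := by rw [transpose_nonsing_inv, hs₁.eq]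
  have t2 : P₂⁻¹ᵀ = P₂⁻¹ := by rw [transpose_nonsing_inv, hs₂.eq]
  refine ⟨?_, ?_, hs₁, ?_, ?_⟩
  · simp only [Mneg, Mpos, fromBlocks_multiply, fromBlocks_inj]
    refine ⟨?_, ?_, ?_, ?_⟩ <;> noncomm_ring [i1, i1', i2, i2']
  · unfold Matrix.IsSymm
    simp only [transpose_sub, transpose_mul, t1, t2]
    noncomm_ring
  · unfold Matrix.IsSymm
    simp [transpose_sub, t1, hs₂.eq]
  · unfold Matrix.IsSymm
    simp [t2]
end

section
/- Let R be a commutative ring, n ≥ 1, and let P denote the 2n×2n block matrix [[Iₙ, 0], [0, Lₙ]]. A 2n×2n matrix M over R is both lower unitriangular (lower triangular with all diagonal entries 1) and Ω̃-symplectic if and only if there exist an upper unitriangular n×n matrix A and a symmetric n×n matrix Z over R such that M = P·M⁻(A,Z)·P. -/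
open Matrix

/-- `Lₙ`: the `n × n` matrix with `1` along the skew-diagonal
(`(Lₙ)ᵢⱼ = 1` iff `i + j = n + 1` in 1-based indexing). -/
def Lmat {R : Type*} [CommRing R] (n : ℕ) : Matrix (Fin n) (Fin n) R :=
  Matrix.of fun i j : Fin n => if (i : ℕ) + (j : ℕ) = n - 1 then 1 else 0

/-- The symplectic form `Ω̃ = [[0, Lₙ], [−Lₙ, 0]]`. -/
def OmegaTilde {R : Type*} [CommRing R] (n : ℕ) :
    Matrix (Fin n ⊕ Fin n) (Fin n ⊕ Fin n) R :=
  Matrix.fromBlocks 0 (Lmat n) (-(Lmat n)) 0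

/-- The block matrix `P = [[Iₙ, 0], [0, Lₙ]]`. -/
def Pmat {R : Type*} [CommRing R] (n : ℕ) :
    Matrix (Fin n ⊕ Fin n) (Fin n ⊕ Fin n) R :=
  Matrix.fromBlocks 1 0 0 (Lmat n)

/-- The position (0-based) of an index of a `2n × 2n` matrix written in block form. -/
def idx {n : ℕ} : Fin n ⊕ Fin n → ℕ := Sum.elim (fun i => (i : ℕ)) fun i => n + (i : ℕ)

/-- Lower triangular with all diagonal entries `1` (for `2n × 2n` matrices in block form). -/
def IsLowerUnitriangular2n {R : Type*} [CommRing R] {n : ℕ}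
    (M : Matrix (Fin n ⊕ Fin n) (Fin n ⊕ Fin n) R) : Prop :=
  (∀ i, M i i = 1) ∧ ∀ i j : Fin n ⊕ Fin n, idx i < idx j → M i j = 0

section Helpers

variable {R : Type*} [CommRing R] {n : ℕ}

lemma Lmat_apply' (i j : Fin n) : Lmat n i j = if i.rev = j then (1 : R) else 0 := by
  have hi := i.isLt; have hj := j.isLt
  simp only [Lmat, Matrix.of_apply, Fin.ext_iff, Fin.val_rev]
  congr 1
  simp only [eq_iff_iff]
  omega

lemma Lmat_mul (X : Matrix (Fin n) (Fin n) R) :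
    Lmat n * X = X.submatrix Fin.rev id := by
  ext i j
  simp [Matrix.mul_apply, Lmat_apply', ite_mul, Finset.sum_ite_eq, Finset.sum_ite_eq']

lemma mul_Lmat (X : Matrix (Fin n) (Fin n) R) :
    X * Lmat n = X.submatrix id Fin.rev := by
  ext i j
  have : ∀ k : Fin n, (Fin.rev k = j) = (k = Fin.rev j) := by
    intro k
    simp only [eq_iff_iff]
    constructor <;> rintro rfl <;> simp [Fin.rev_rev]
  simp [Matrix.mul_apply, Lmat_apply', mul_ite, this, Finset.sum_ite_eq, Finset.sum_ite_eq']

lemma Lmat_mul_Lmat : (Lmat n : Matrix (Fin n) (Fin n) R) * Lmat n = 1 := by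
  rw [Lmat_mul]
  ext i j
  simp [Lmat_apply', Fin.rev_rev, Matrix.one_apply]

lemma Lmat_transpose : (Lmat n : Matrix (Fin n) (Fin n) R)ᵀ = Lmat n := by
  ext i j
  simp only [Matrix.transpose_apply, Lmat, Matrix.of_apply]
  congr 1
  simp only [eq_iff_iff]
  omega

lemma unitri_det (B : Matrix (Fin n) (Fin n) R) (h1 : ∀ i, B i i = 1)
    (h2 : ∀ i j : Fin n, i < j → B i j = 0) : B.det = 1 := by
  rw [Matrix.det_of_lowerTriangular B (fun i j hij => h2 i j hij)]
  simp [h1]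

lemma unitri_inv (B : Matrix (Fin n) (Fin n) R) (h1 : ∀ i, B i i = 1)
    (h2 : ∀ i j : Fin n, i < j → B i j = 0) :
    (∀ i, B⁻¹ i i = 1) ∧ ∀ i j : Fin n, i < j → B⁻¹ i j = 0 := by
  have hdet : IsUnit B.det := by rw [unitri_det B h1 h2]; exact isUnit_one
  haveI : Invertible B := B.invertibleOfIsUnitDet hdet
  have htri : B.BlockTriangular OrderDual.toDual := fun i j h => h2 i j h
  have hinv := Matrix.blockTriangular_inv_of_blockTriangular htri
  refine ⟨?_, fun i j h => hinv h⟩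
  intro i
  have h := congrFun (congrFun (Matrix.nonsing_inv_mul B hdet) i) i
  rw [Matrix.mul_apply, Finset.sum_eq_single i] at h
  · simpa [h1 i, Matrix.one_apply] using h
  · intro k _ hk
    rcases lt_or_gt_of_ne hk with hlt | hgt
    · exact mul_eq_zero_of_right _ (h2 k i hlt)
    · exact mul_eq_zero_of_left (hinv hgt) _
  · simp

end Helpers

theorem stmt12 {R : Type*} [CommRing R] {n : ℕ} (hn : 1 ≤ n)
    (M : Matrix (Fin n ⊕ Fin n) (Fin n ⊕ Fin n) R) :
    (IsLowerUnitriangular2n M ∧ Mᵀ * OmegaTilde n * M = OmegaTilde n) ↔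
      ∃ A Z : Matrix (Fin n) (Fin n) R, IsUpperUnitriangular A ∧ Z.IsSymm ∧
        M = Pmat n * MnegAZ A Z * Pmat n := by
  set J : Matrix (Fin n) (Fin n) R := Lmat n with hJ
  have hJJ : J * J = 1 := Lmat_mul_Lmat
  have hJt : Jᵀ = J := Lmat_transpose
  constructor
  · rintro ⟨⟨hdiag, hlow⟩, hsymp⟩
    set B := M.toBlocks₁₁ with hB
    set C := M.toBlocks₂₁ with hC
    set D := M.toBlocks₂₂ with hD
    have h12 : M.toBlocks₁₂ = 0 := by
      ext i j
      refine hlow (Sum.inl i) (Sum.inr j) ?_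
      simp only [idx, Sum.elim_inl, Sum.elim_inr]
      have := i.isLt
      omega
    have hM : M = Matrix.fromBlocks B 0 C D := by
      conv_lhs => rw [← Matrix.fromBlocks_toBlocks M]
      rw [h12]
    have hB1 : ∀ i, B i i = 1 := fun i => hdiag (Sum.inl i)
    have hB2 : ∀ i j : Fin n, i < j → B i j = 0 := fun i j h =>
      hlow (Sum.inl i) (Sum.inl j) (by simpa [idx] using h)
    have hdet : IsUnit B.det := by rw [unitri_det B hB1 hB2]; exact isUnit_one
    haveI : Invertible B := B.invertibleOfIsUnitDet hdet
    haveI : Invertible Bᵀ := B.invertibleTranspose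
    rw [hM, OmegaTilde, Matrix.fromBlocks_transpose, Matrix.fromBlocks_multiply,
      Matrix.fromBlocks_multiply] at hsymp
    rw [← hJ] at hsymp
    obtain ⟨e11, e12, _, _⟩ := Matrix.fromBlocks_inj.mp hsymp
    simp only [Matrix.mul_zero, Matrix.zero_mul, Matrix.mul_neg, Matrix.neg_mul,
      add_zero, zero_add, Matrix.mul_assoc] at e11 e12
    -- e11 : -(Cᵀ * (J * B)) + Bᵀ * (J * C) = 0  (shape to confirm)
    have eSym : Bᵀ * (J * C) = Cᵀ * (J * B) := (neg_add_eq_zero.mp e11).symm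
    have eBD : Bᵀ * (J * D) = J := e12
    refine ⟨(B⁻¹)ᵀ, J * C * B⁻¹, ?_, ?_, ?_⟩
    · obtain ⟨hi1, hi2⟩ := unitri_inv B hB1 hB2
      exact ⟨fun i => hi1 i, fun i j h => hi2 j i h⟩
    · have key : J * C * B⁻¹ = Bᵀ⁻¹ * (Cᵀ * J) := by
        have h1 : J * C = Bᵀ⁻¹ * (Cᵀ * (J * B)) := by
          rw [← eSym, Matrix.inv_mul_cancel_left_of_invertible]
        rw [h1]
        simp only [Matrix.mul_assoc]
        rw [Matrix.mul_inv_of_invertible, Matrix.mul_one]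
      have ht : (J * C * B⁻¹)ᵀ = Bᵀ⁻¹ * (Cᵀ * J) := by
        rw [Matrix.transpose_mul, Matrix.transpose_mul, Matrix.transpose_nonsing_inv, hJt]
      exact ht.trans key.symm
    · have hAti : (((B⁻¹)ᵀ)ᵀ)⁻¹ = B := by
        rw [Matrix.transpose_transpose, Matrix.nonsing_inv_nonsing_inv B hdet]
      have hDval : D = J * ((B⁻¹)ᵀ * J) := by
        have h1 : J * D = Bᵀ⁻¹ * J := by
          conv_rhs => rw [← eBD]
          rw [Matrix.inv_mul_cancel_left_of_invertible]
        have h2 : D = J * (Bᵀ⁻¹ * J) := by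
          rw [← h1, ← Matrix.mul_assoc, hJJ, Matrix.one_mul]
        rw [h2, ← Matrix.transpose_nonsing_inv]
      have hCval : J * (J * C * B⁻¹ * B) = C := by
        simp only [Matrix.mul_assoc]
        rw [Matrix.nonsing_inv_mul B hdet, Matrix.mul_one, ← Matrix.mul_assoc, hJJ,
          Matrix.one_mul]
      rw [hM, MnegAZ, hAti, Pmat, ← hJ, Matrix.fromBlocks_multiply, Matrix.fromBlocks_multiply,
        Matrix.fromBlocks_multiply]
      simp only [Matrix.mul_zero, Matrix.zero_mul, Matrix.mul_one, Matrix.one_mul,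
        add_zero, zero_add, Matrix.mul_assoc]
      refine Matrix.fromBlocks_inj.mpr ⟨rfl, rfl, ?_, ?_⟩
      · rw [Matrix.nonsing_inv_mul B hdet, Matrix.mul_one, ← Matrix.mul_assoc J J, hJJ,
          Matrix.one_mul]
      · rw [hDval]
  · rintro ⟨A, Z, ⟨hA1, hA2⟩, hZ, rfl⟩
    have hAt1 : ∀ i, Aᵀ i i = 1 := fun i => hA1 i
    have hAt2 : ∀ i j : Fin n, i < j → Aᵀ i j = 0 := fun i j h => hA2 j i h
    have hdet : IsUnit Aᵀ.det := by rw [unitri_det Aᵀ hAt1 hAt2]; exact isUnit_one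
    have hdetA : IsUnit A.det := by rwa [Matrix.det_transpose] at hdet
    haveI : Invertible Aᵀ := (Aᵀ).invertibleOfIsUnitDet hdet
    haveI : Invertible A := A.invertibleOfIsUnitDet hdetA
    obtain ⟨hBi1, hBi2⟩ := unitri_inv Aᵀ hAt1 hAt2
    have hPMP : Pmat n * MnegAZ A Z * Pmat n
        = Matrix.fromBlocks ((Aᵀ)⁻¹) 0 (J * (Z * (Aᵀ)⁻¹)) (J * (A * J)) := by
      rw [Pmat, MnegAZ, ← hJ, Matrix.fromBlocks_multiply, Matrix.fromBlocks_multiply,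
        Matrix.fromBlocks_multiply]
      simp only [Matrix.mul_zero, Matrix.zero_mul, Matrix.mul_one, Matrix.one_mul,
        add_zero, zero_add, Matrix.mul_assoc]
    have hJAJ : J * (A * J) = A.submatrix Fin.rev Fin.rev := by
      rw [mul_Lmat, Lmat_mul]
      simp [Matrix.submatrix_submatrix]
    constructor
    · constructor
      · rintro (i | i)
        · rw [hPMP]; exact hBi1 i
        · rw [hPMP]
          show (J * (A * J)) i i = 1
          rw [hJAJ]
          exact hA1 i.rev
      · rintro (i | i) (j | j) h <;>
          simp only [idx, Sum.elim_inl, Sum.elim_inr] at h <;> rw [hPMP]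
        · exact hBi2 i j (by exact_mod_cast h)
        · rfl
        · exact absurd h (by have := j.isLt; omega)
        · show (J * (A * J)) i j = 0
          rw [hJAJ]
          refine hA2 i.rev j.rev ?_
          have hi := i.isLt; have hj := j.isLt
          simp only [Fin.lt_def, Fin.val_rev] at h ⊢
          omega
    · rw [hPMP, OmegaTilde, ← hJ, Matrix.fromBlocks_transpose, Matrix.fromBlocks_multiply,
        Matrix.fromBlocks_multiply]
      have hBt : ((Aᵀ)⁻¹)ᵀ = A⁻¹ := by
        rw [Matrix.transpose_nonsing_inv, Matrix.transpose_transpose]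
      have hZt : Zᵀ = Z := hZ
      refine Matrix.fromBlocks_inj.mpr ⟨?_, ?_, ?_, ?_⟩
      · -- (Bᵀ*0 + Cᵀ*(-J))*B + (Bᵀ*J + Cᵀ*0)*C = 0  with B=(Aᵀ)⁻¹, C=J*(Z*(Aᵀ)⁻¹), D=J*(A*J)
        simp only [Matrix.mul_zero, Matrix.zero_mul, Matrix.mul_neg, Matrix.neg_mul,
          add_zero, zero_add, Matrix.transpose_mul, hBt, hJt, hZt, Matrix.mul_assoc]
        rw [← Matrix.mul_assoc J J, hJJ, Matrix.one_mul]
        rw [← Matrix.mul_assoc J J, hJJ, Matrix.one_mul]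
        simp [Matrix.mul_assoc]
      · simp only [Matrix.mul_zero, Matrix.zero_mul, add_zero, zero_add, hBt,
          Matrix.mul_assoc]
        rw [← Matrix.mul_assoc J J, hJJ, Matrix.one_mul, ← Matrix.mul_assoc A⁻¹ A,
          Matrix.nonsing_inv_mul A hdetA, Matrix.one_mul]
      · simp only [Matrix.mul_zero, Matrix.zero_mul, Matrix.mul_neg, Matrix.neg_mul,
          add_zero, zero_add, Matrix.transpose_zero, Matrix.transpose_mul, hJt,
          Matrix.transpose_transpose, Matrix.mul_assoc]
        rw [← Matrix.mul_assoc J J, hJJ, Matrix.one_mul,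
          Matrix.mul_nonsing_inv Aᵀ hdet, Matrix.mul_one]
      · simp [Matrix.mul_zero, Matrix.zero_mul]
end

section
/- Let R be a commutative ring that is an algebra over ℂ, let n ≥ 1, and let λ₁, …, λₙ be pairwise distinct nonzero complex numbers. Let A be an upper triangular n×n matrix over R whose i-th diagonal entry equals λᵢ·1_R for each i. Then there exist invertible symmetric n×n matrices P₁ and P₂ over R such that A = P₁·P₂. In particular, every such triangular matrix is a product of two invertible symmetric matrices. -/
open Matrix Polynomial

section Aux

variable {R : Type*} [CommRing R] [Algebra ℂ R] {n : ℕ}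

omit [Algebra ℂ R] in
lemma aux_pow_tri (A : Matrix (Fin n) (Fin n) R) (hA : A.BlockTriangular id) (k : ℕ) :
    (A ^ k).BlockTriangular id := by
  induction k with
  | zero => simpa [pow_zero] using blockTriangular_one
  | succ k ih => rw [pow_succ]; exact ih.mul hA

lemma aux_aeval_tri (A : Matrix (Fin n) (Fin n) R) (hA : A.BlockTriangular id) (p : ℂ[X]) :
    (Polynomial.aeval A p).BlockTriangular id := by
  induction p using Polynomial.induction_on' with
  | add p q hp hq => rw [map_add]; exact hp.add hq
  | monomial k c =>
      rw [Polynomial.aeval_monomial, Matrix.algebraMap_eq_diagonal]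
      exact (blockTriangular_diagonal _).mul (aux_pow_tri A hA k)

omit [Algebra ℂ R] in
lemma aux_mul_diag (M N : Matrix (Fin n) (Fin n) R) (hM : M.BlockTriangular id)
    (hN : N.BlockTriangular id) (i : Fin n) : (M * N) i i = M i i * N i i := by
  rw [Matrix.mul_apply]
  rw [Finset.sum_eq_single i]
  · intro k _ hk
    rcases lt_or_gt_of_ne hk with h | h
    · rw [hM h]; ring
    · rw [hN h]; ring
  · intro h; exact absurd (Finset.mem_univ i) h

omit [Algebra ℂ R] in
lemma aux_pow_diag (A : Matrix (Fin n) (Fin n) R) (hA : A.BlockTriangular id) (k : ℕ)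
    (i : Fin n) : (A ^ k) i i = (A i i) ^ k := by
  induction k with
  | zero => simp [pow_zero, Matrix.one_apply]
  | succ k ih =>
      rw [pow_succ, pow_succ, aux_mul_diag _ _ (aux_pow_tri A hA k) hA, ih]

lemma aux_aeval_diag (A : Matrix (Fin n) (Fin n) R) (hA : A.BlockTriangular id) (i : Fin n)
    (c : ℂ) (hAi : A i i = algebraMap ℂ R c) (p : ℂ[X]) :
    (Polynomial.aeval A p) i i = algebraMap ℂ R (p.eval c) := by
  induction p using Polynomial.induction_on' with
  | add p q hp hq => rw [map_add, Matrix.add_apply, hp, hq, eval_add, map_add]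
  | monomial k a =>
      rw [Polynomial.aeval_monomial, Matrix.algebraMap_eq_diagonal,
        Matrix.diagonal_mul, aux_pow_diag A hA k i, hAi, eval_monomial]
      simp [Pi.algebraMap_apply, ← map_pow, ← _root_.map_mul]

end Aux

theorem stmt17 {R : Type*} [CommRing R] [Algebra ℂ R] {n : ℕ} (hn : 1 ≤ n)
    (lam : Fin n → ℂ) (hlam : Function.Injective lam) (hne : ∀ i, lam i ≠ 0)
    (A : Matrix (Fin n) (Fin n) R)
    (hAtri : ∀ i j : Fin n, j < i → A i j = 0)
    (hAdiag : ∀ i, A i i = algebraMap ℂ R (lam i)) :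
    ∃ P₁ P₂ : Matrix (Fin n) (Fin n) R,
      IsUnit P₁ ∧ IsUnit P₂ ∧ P₁.IsSymm ∧ P₂.IsSymm ∧ A = P₁ * P₂ := by
  classical
  have hA : A.BlockTriangular id := fun i j h => hAtri i j h
  -- the characteristic polynomial, over ℂ
  set q : ℂ[X] := ∏ k : Fin n, (X - C (lam k)) with hq
  have hqA : Polynomial.aeval A q = 0 := by
    have hmap : q.map (algebraMap ℂ R) = A.charpoly := by
      rw [Matrix.charpoly]
      have htri : (Matrix.charmatrix A).BlockTriangular id := by
        intro i j hij
        have hij' : i ≠ j := fun h => absurd hij (by simp [h])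
        rw [Matrix.charmatrix_apply_ne A _ _ hij', hAtri i j hij, map_zero, neg_zero]
      rw [Matrix.det_of_upperTriangular htri, hq, Polynomial.map_prod]
      refine Finset.prod_congr rfl fun i _ => ?_
      rw [Matrix.charmatrix_apply_eq, Polynomial.map_sub, Polynomial.map_X, Polynomial.map_C,
        hAdiag i]
    rw [← Polynomial.aeval_map_algebraMap R, hmap, Matrix.aeval_self_charpoly]
  -- the Lagrange-type polynomials p j and the matrix K of eigenvectors
  set p : Fin n → ℂ[X] :=
    fun j => ∏ k ∈ Finset.univ.erase j, (C (lam j - lam k)⁻¹ * (X - C (lam k))) with hp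
  set K : Matrix (Fin n) (Fin n) R := Matrix.of fun i j => (Polynomial.aeval A (p j)) i j
    with hK
  have hKtri : K.BlockTriangular id := fun i j hij => aux_aeval_tri A hA (p j) hij
  have hKdiag : ∀ j, K j j = 1 := by
    intro j
    have h1 : ∀ k ∈ Finset.univ.erase j,
        ((C (lam j - lam k)⁻¹ * (X - C (lam k))).eval (lam j)) = 1 := by
      intro k hk
      have hkj : lam j - lam k ≠ 0 := by
        rw [sub_ne_zero]
        exact fun h => (Finset.ne_of_mem_erase hk).symm (hlam h)
      rw [eval_mul, eval_sub, eval_C, eval_X, eval_C]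
      field_simp
    rw [hK, Matrix.of_apply, aux_aeval_diag A hA j (lam j) (hAdiag j) (p j), hp,
      Polynomial.eval_prod, Finset.prod_congr rfl h1, Finset.prod_const_one, _root_.map_one]
  -- eigenvector equation
  have heig : ∀ j, (A - algebraMap ℂ (Matrix (Fin n) (Fin n) R) (lam j)) *
      Polynomial.aeval A (p j) = 0 := by
    intro j
    have h1 : (X - C (lam j)) * p j
        = C (∏ k ∈ Finset.univ.erase j, (lam j - lam k)⁻¹) * q := by
      simp only [hp]
      rw [Finset.prod_mul_distrib, ← mul_assoc, mul_comm (X - C (lam j)), mul_assoc,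
        Finset.mul_prod_erase Finset.univ (fun k => (X : Polynomial ℂ) - C (lam k)) (Finset.mem_univ j), ← hq, map_prod]
    have h2 : Polynomial.aeval A (X - C (lam j))
        = A - algebraMap ℂ (Matrix (Fin n) (Fin n) R) (lam j) := by
      rw [map_sub, Polynomial.aeval_X, Polynomial.aeval_C]
    calc (A - algebraMap ℂ (Matrix (Fin n) (Fin n) R) (lam j)) * Polynomial.aeval A (p j)
        = Polynomial.aeval A ((X - C (lam j)) * p j) := by rw [_root_.map_mul, h2]
      _ = Polynomial.aeval A (C (∏ k ∈ Finset.univ.erase j, (lam j - lam k)⁻¹) * q) := by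
          rw [h1]
      _ = 0 := by rw [_root_.map_mul, hqA, mul_zero]
  -- A * K = K * D
  set D : Matrix (Fin n) (Fin n) R := Matrix.diagonal (fun j => algebraMap ℂ R (lam j))
    with hD
  have hAK : A * K = K * D := by
    ext i j
    have h2 : A * Polynomial.aeval A (p j)
        = algebraMap ℂ (Matrix (Fin n) (Fin n) R) (lam j) * Polynomial.aeval A (p j) := by
      have := heig j
      rwa [sub_mul, sub_eq_zero] at this
    have h3 : (A * K) i j = (A * Polynomial.aeval A (p j)) i j := rfl
    rw [h3, h2, Matrix.algebraMap_eq_diagonal, Matrix.diagonal_mul, hD, Matrix.mul_diagonal]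
    rw [hK, Matrix.of_apply, Pi.algebraMap_apply]
    ring
  -- K is invertible
  have hKdet : IsUnit K.det := by
    rw [Matrix.det_of_upperTriangular hKtri]
    simp only [hKdiag, Finset.prod_const_one]
    exact isUnit_one
  set K' : Matrix (Fin n) (Fin n) R := K⁻¹ with hK'
  have hKK' : K * K' = 1 := Matrix.mul_nonsing_inv K hKdet
  have hK'K : K' * K = 1 := Matrix.nonsing_inv_mul K hKdet
  have hK'det : IsUnit K'.det := by
    have := congrArg Matrix.det hK'K
    rw [Matrix.det_mul, Matrix.det_one] at this
    exact IsUnit.of_mul_eq_one _ this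
  have hDdet : IsUnit D.det := by
    rw [hD, Matrix.det_diagonal, ← _root_.map_prod]
    exact (RingHom.isUnit_map _) (Ne.isUnit (Finset.prod_ne_zero_iff.2 fun i _ => hne i))
  -- A = K * D * K'
  have hAKDK : A = K * D * K' := by
    have : A * (K * K') = K * D * K' := by rw [← Matrix.mul_assoc, hAK]
    rwa [hKK', Matrix.mul_one] at this
  refine ⟨K * Kᵀ, K'ᵀ * (D * K'), ?_, ?_, ?_, ?_, ?_⟩
  · exact ((Matrix.isUnit_iff_isUnit_det K).2 hKdet).mul
      ((Matrix.isUnit_iff_isUnit_det Kᵀ).2 (by rwa [Matrix.det_transpose]))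
  · exact ((Matrix.isUnit_iff_isUnit_det K'ᵀ).2 (by rwa [Matrix.det_transpose])).mul
      (((Matrix.isUnit_iff_isUnit_det D).2 hDdet).mul
        ((Matrix.isUnit_iff_isUnit_det K').2 hK'det))
  · rw [Matrix.IsSymm, Matrix.transpose_mul, Matrix.transpose_transpose]
  · rw [Matrix.IsSymm, Matrix.transpose_mul, Matrix.transpose_mul,
      Matrix.transpose_transpose, hD, Matrix.diagonal_transpose, Matrix.mul_assoc]
  · have hTT : Kᵀ * K'ᵀ = 1 := by
      rw [← Matrix.transpose_mul, hK'K, Matrix.transpose_one]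
    calc A = K * D * K' := hAKDK
      _ = K * (Kᵀ * K'ᵀ) * (D * K') := by rw [hTT, Matrix.mul_one, Matrix.mul_assoc]
      _ = K * Kᵀ * (K'ᵀ * (D * K')) := by
          rw [Matrix.mul_assoc, Matrix.mul_assoc, Matrix.mul_assoc]
end
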